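/- Let r be a prime, G an elementary abelian group of order r^m, and q a prime power with r ∤ q. Set n = ord(q mod r). If n > 1, then up to equivalence G has exactly one irreducible 𝔽_q-representation of degree 1 and exactly (r^m − 1)/n irreducible 𝔽_q-representations of degree n, and no others. -/

import Mathlib

set_option synthInstance.maxHeartbeats 400000
set_option maxHeartbeats 1000000

open MonoidAlgebra


lemma charF (p k q : ℕ) (hp : p.Prime) (hk : 0 < k) (hq : q = p ^ k)
    (F : Type*) [Field F] [Fintype F] (hF : Fintype.card F = q) : CharP F p := by
  have hc : CharP F (ringChar F) := ringChar.charP F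
  have hcp : (ringChar F).Prime := CharP.char_is_prime F _
  haveI : Fact (ringChar F).Prime := ⟨hcp⟩
  obtain ⟨s, -, hcard⟩ := FiniteField.card F (ringChar F)
  have : ringChar F = p := by
    have hdvd : ringChar F ∣ p ^ k := by
      rw [← hq, ← hF, hcard]; exact dvd_pow_self _ s.ne_zero
    exact ((Nat.prime_dvd_prime_iff_eq hcp hp).mp (hcp.dvd_of_dvd_pow hdvd))
  rwa [this] at hc

lemma red (r m : ℕ) (hr : r.Prime)
    (G : Type*) [CommGroup G] [Fintype G] (hcard : Fintype.card G = r ^ m)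
    (p k q : ℕ) (hp : p.Prime) (hk : 0 < k) (hq : q = p ^ k) (hrq : ¬ r ∣ q)
    (F : Type*) [Field F] [Fintype F] (hF : Fintype.card F = q) :
    IsReduced (MonoidAlgebra F G) := by
  haveI := charF p k q hp hk hq F hF
  haveI : CharP (MonoidAlgebra F G) p :=
    charP_of_injective_algebraMap (algebraMap F (MonoidAlgebra F G)).injective p
  haveI : Fact p.Prime := ⟨hp⟩
  have hq2 : 2 ≤ q := hq ▸ Nat.one_lt_pow hk.ne' hp.two_le
  -- the q-power map
  have hfrob0 : ∀ x : MonoidAlgebra F G,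
      iterateFrobenius (MonoidAlgebra F G) p k x = MonoidAlgebra.mapDomain (· ^ q) x := by
    intro x
    induction x using MonoidAlgebra.induction_linear with
    | zero => rw [map_zero]; simp
    | add a b ha hb => rw [map_add, MonoidAlgebra.mapDomain_add, ha, hb]
    | single g c =>
        rw [MonoidAlgebra.mapDomain_single, iterateFrobenius_def, ← hq]
        show MonoidAlgebra.single g c ^ q = MonoidAlgebra.single (g ^ q) c
        rw [MonoidAlgebra.single_pow]
        congr 1
        rw [← hF, FiniteField.pow_card]
  have hfrob : ∀ x : MonoidAlgebra F G, x ^ q = MonoidAlgebra.mapDomain (· ^ q) x := by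
    intro x
    rw [← hfrob0, iterateFrobenius_def, hq]
  have hGinj : Function.Injective (fun g : G => g ^ q) := by
    have hco : (Nat.card G).Coprime q := by
      rw [Nat.card_eq_fintype_card, hcard]
      exact Nat.Coprime.pow_left m ((Nat.Prime.coprime_iff_not_dvd hr).mpr hrq)
    exact (powCoprime hco).injective
  have hinj : ∀ x : MonoidAlgebra F G, x ^ q = 0 → x = 0 := by
    intro x hx
    rw [hfrob] at hx
    exact MonoidAlgebra.mapDomain_injective hGinj (by simpa using hx)
  constructor
  rintro x ⟨N, hN⟩
  have key : ∀ N : ℕ, ∀ x : MonoidAlgebra F G, x ^ q ^ N = 0 → x = 0 := by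
    intro N
    induction N with
    | zero => intro x hx; simpa using hx
    | succ N ih =>
        intro x hx
        apply ih
        apply hinj
        rw [← pow_mul, ← pow_succ]; exact hx
  apply key N
  have hle : N ≤ q ^ N := Nat.le_of_lt (Nat.lt_pow_self (n := N) hq2)
  calc x ^ q ^ N = x ^ N * x ^ (q ^ N - N) := by rw [← pow_add, Nat.add_sub_cancel' hle]
  _ = 0 := by rw [hN, zero_mul]

section Dichotomy
variable (r m : ℕ) (hr : r.Prime)
    (G : Type*) [CommGroup G] [Fintype G]
    (hG : ∀ g : G, g ^ r = 1)
    (p k q : ℕ) (hp : p.Prime) (hk : 0 < k) (hq : q = p ^ k)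
    (F : Type*) [Field F] [Fintype F] (hF : Fintype.card F = q)
    (n : ℕ) (hn : n = orderOf ((q : ZMod r))) (hn1 : 1 < n)

lemma span_range_mk' (I : Ideal (MonoidAlgebra F G)) :
    Submodule.span F (Set.range fun g : G =>
      Ideal.Quotient.mk I (MonoidAlgebra.of F G g)) = ⊤ := by
  have hb : Submodule.span F (Set.range fun g : G => (MonoidAlgebra.of F G g :
      MonoidAlgebra F G)) = ⊤ := by
    have := (MonoidAlgebra.basis G F).span_eq
    convert this using 2
    rfl
  have : (Set.range fun g : G => Ideal.Quotient.mk I (MonoidAlgebra.of F G g)) =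
      (Ideal.Quotient.mkₐ F I).toLinearMap '' (Set.range fun g : G =>
        (MonoidAlgebra.of F G g : MonoidAlgebra F G)) := by
    rw [← Set.range_comp]; rfl
  rw [this, ← Submodule.map_span, hb, Submodule.map_top, LinearMap.range_eq_top.mpr]
  exact Ideal.Quotient.mkₐ_surjective F I

include hr hG hp hk hq hF hn hn1 in
lemma dim_n_of_nontrivial [Module.Finite F (MonoidAlgebra F G)]
    (I : Ideal (MonoidAlgebra F G)) [I.IsMaximal]
    (h : ∃ g : G, Ideal.Quotient.mk I (MonoidAlgebra.of F G g) ≠ 1) :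
    Module.finrank F (MonoidAlgebra F G ⧸ I) = n := by
  classical
  haveI : Fact r.Prime := ⟨hr⟩
  haveI : Fact p.Prime := ⟨hp⟩
  haveI := NeZero.of_pos hr.pos
  set K := MonoidAlgebra F G ⧸ I with hK
  letI : Field K := Ideal.Quotient.field I
  haveI : Finite K := Module.finite_of_finite F
  haveI : Fintype K := Fintype.ofFinite K
  set d := Module.finrank F K with hd
  have hq2 : 2 ≤ q := hq ▸ Nat.one_lt_pow hk.ne' hp.two_le
  have hcardK : Fintype.card K = q ^ d := by rw [Module.card_eq_pow_finrank (K := F), hF]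
  -- all images of G are r-th roots of unity
  have hpow : ∀ g : G, (Ideal.Quotient.mk I (MonoidAlgebra.of F G g)) ^ r = 1 := by
    intro g
    rw [← map_pow, ← map_pow, hG g, map_one, map_one]
  have hd0 : 0 < d := Module.finrank_pos
  -- Step B : n ∣ d
  obtain ⟨g, hg⟩ := h
  have hxr := hpow g
  set x := Ideal.Quotient.mk I (MonoidAlgebra.of F G g) with hx
  have hordx : orderOf x = r := orderOf_eq_prime hxr hg
  have hxunit : IsUnit x := by
    refine IsUnit.of_mul_eq_one (x ^ (r - 1)) ?_
    rw [← pow_succ', Nat.sub_add_cancel hr.pos, hxr]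
  have hrdvd : r ∣ q ^ d - 1 := by
    have h1 : orderOf hxunit.unit ∣ Nat.card Kˣ := orderOf_dvd_natCard _
    rw [← orderOf_units, hxunit.unit_spec, hordx] at h1
    rwa [Nat.card_units, Nat.card_eq_fintype_card, hcardK] at h1
  have hndvd : n ∣ d := by
    have hqd1 : (1:ℕ) ≤ q ^ d := Nat.one_le_pow _ _ (by omega)
    have hz : ((q ^ d - 1 : ℕ) : ZMod r) = 0 := (ZMod.natCast_eq_zero_iff _ _).mpr hrdvd
    have : ((q : ZMod r)) ^ d = 1 := by
      have : ((q ^ d : ℕ) : ZMod r) = (((q ^ d - 1) + 1 : ℕ) : ZMod r) := by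
        rw [Nat.sub_add_cancel hqd1]
      push_cast at this hz ⊢
      rw [this, hz, zero_add]
    rw [hn]
    exact orderOf_dvd_of_pow_eq_one this
  -- Step C : d ≤ n
  haveI : CharP F p := charF p k q hp hk hq F hF
  haveI : CharP K p := charP_of_injective_algebraMap (algebraMap F K).injective p
  have hqn : q ^ n = p ^ (k * n) := by rw [hq, pow_mul]
  have hfixF : ∀ c : F, (algebraMap F K c) ^ q ^ n = algebraMap F K c := by
    intro c
    rw [← map_pow]
    congr 1
    rw [← hF, FiniteField.pow_card_pow]
  have hrqn : r ∣ q ^ n - 1 := by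
    have h1 : ((q : ZMod r)) ^ n = 1 := by rw [hn]; exact pow_orderOf_eq_one _
    have hqn1 : (1:ℕ) ≤ q ^ n := Nat.one_le_pow _ _ (by omega)
    have : ((q ^ n - 1 : ℕ) : ZMod r) = 0 := by
      push_cast [Nat.cast_sub hqn1]
      rw [h1, sub_self]
    exact (ZMod.natCast_eq_zero_iff _ _).mp this
  -- the Frobenius-power algebra endomorphism
  have hψlin : ∀ (c : F) (y : K), (algebraMap F K c * y) ^ q ^ n = algebraMap F K c * y ^ q ^ n := by
    intro c y
    rw [mul_pow, hfixF]
  let ψ : K →ₐ[F] K :=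
    { toRingHom := iterateFrobenius K p (k * n)
      commutes' := fun c => by
        show iterateFrobenius K p (k * n) (algebraMap F K c) = algebraMap F K c
        rw [iterateFrobenius_def, ← hqn, hfixF] }
  have hψ : ∀ y : K, ψ y = y ^ q ^ n := fun y => by
    show iterateFrobenius K p (k * n) y = _
    rw [iterateFrobenius_def, ← hqn]
  have hgen : ∀ g' : G, ψ (Ideal.Quotient.mk I (MonoidAlgebra.of F G g')) =
      Ideal.Quotient.mk I (MonoidAlgebra.of F G g') := by
    intro g'
    rw [hψ]
    obtain ⟨t, ht⟩ := hrqn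
    have hqn1 : (1:ℕ) ≤ q ^ n := Nat.one_le_pow _ _ (by omega)
    calc (Ideal.Quotient.mk I (MonoidAlgebra.of F G g')) ^ q ^ n
        = (Ideal.Quotient.mk I (MonoidAlgebra.of F G g')) ^ ((q ^ n - 1) + 1) := by
          rw [Nat.sub_add_cancel hqn1]
      _ = ((Ideal.Quotient.mk I (MonoidAlgebra.of F G g')) ^ r) ^ t *
            Ideal.Quotient.mk I (MonoidAlgebra.of F G g') := by
          rw [pow_succ, ← pow_mul, ← ht]
      _ = _ := by rw [hpow g', one_pow, one_mul]
  have hfixall : ∀ y : K, y ^ q ^ n = y := by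
    intro y
    have hy : y ∈ Subalgebra.toSubmodule (AlgHom.equalizer ψ (AlgHom.id F K)) := by
      refine Submodule.span_le.mpr ?_ (show y ∈ Submodule.span F _ by
        rw [span_range_mk' G F I]; trivial)
      rintro - ⟨g', rfl⟩
      exact hgen g'
    rw [← hψ y]
    exact hy
  -- card K ≤ q ^ n
  have hdn : d ≤ n := by
    have hne : (Polynomial.X ^ q ^ n - Polynomial.X : Polynomial K) ≠ 0 :=
      FiniteField.X_pow_card_pow_sub_X_ne_zero K (by omega) hq2
    have hdeg : (Polynomial.X ^ q ^ n - Polynomial.X : Polynomial K).natDegree = q ^ n :=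
      FiniteField.X_pow_card_pow_sub_X_natDegree_eq K (by omega) hq2
    have hsub : (Finset.univ : Finset K) ⊆
        (Polynomial.X ^ q ^ n - Polynomial.X : Polynomial K).roots.toFinset := by
      intro y _
      rw [Multiset.mem_toFinset, Polynomial.mem_roots hne]
      simp [Polynomial.IsRoot, hfixall y]
    have hcardle : Fintype.card K ≤ q ^ n := by
      calc Fintype.card K = (Finset.univ : Finset K).card := rfl
        _ ≤ (Polynomial.X ^ q ^ n - Polynomial.X : Polynomial K).roots.toFinset.card :=
            Finset.card_le_card hsub
        _ ≤ Multiset.card (Polynomial.X ^ q ^ n - Polynomial.X : Polynomial K).roots :=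
            Multiset.toFinset_card_le _
        _ ≤ (Polynomial.X ^ q ^ n - Polynomial.X : Polynomial K).natDegree :=
            Polynomial.card_roots' _
        _ = q ^ n := hdeg
    rw [hcardK] at hcardle
    exact (Nat.pow_le_pow_iff_right (by omega)).mp hcardle
  exact Nat.le_antisymm hdn (Nat.le_of_dvd hd0 hndvd)



lemma dim_one_of_trivial (I : Ideal (MonoidAlgebra F G)) [I.IsMaximal]
    (h : ∀ g : G, Ideal.Quotient.mk I (MonoidAlgebra.of F G g) = 1) :
    Module.finrank F (MonoidAlgebra F G ⧸ I) = 1 := by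
  haveI : Nontrivial (MonoidAlgebra F G ⧸ I) :=
    Ideal.Quotient.nontrivial_iff.mpr (Ideal.IsMaximal.ne_top ‹_›)
  have hspan := span_range_mk' G F I
  have htop : (⊤ : Submodule F (MonoidAlgebra F G ⧸ I)) =
      Submodule.span F {(1 : MonoidAlgebra F G ⧸ I)} := by
    refine le_antisymm ?_ le_top
    rw [← hspan]
    refine Submodule.span_mono ?_
    rintro - ⟨g, rfl⟩
    exact h g
  have h10 : (1 : MonoidAlgebra F G ⧸ I) ≠ 0 := by
    intro h
    have h1 : (1 : MonoidAlgebra F G) ∈ I :=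
      Ideal.Quotient.eq_zero_iff_mem.mp (by rw [map_one, h])
    exact (Ideal.IsMaximal.ne_top ‹_›) ((Ideal.eq_top_iff_one I).mpr h1)
  rw [← finrank_top F (MonoidAlgebra F G ⧸ I), htop,
    finrank_span_singleton h10]

include hr hG in
lemma aug_unique (I J : Ideal (MonoidAlgebra F G)) (hI : I.IsMaximal) (hJ : J.IsMaximal)
    (hIg : ∀ g : G, MonoidAlgebra.of F G g - 1 ∈ I)
    (hJg : ∀ g : G, MonoidAlgebra.of F G g - 1 ∈ J) : I = J := by
  have key : ∀ (I' : Ideal (MonoidAlgebra F G)), I'.IsMaximal →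
      (∀ g : G, MonoidAlgebra.of F G g - 1 ∈ I') →
      ∀ (J' : Ideal (MonoidAlgebra F G)), (∀ g : G, MonoidAlgebra.of F G g - 1 ∈ J') →
      I' ≤ J' := by
    intro I' hI' hIg' J' hJg' x hx
    have hb : Submodule.span F (Set.range fun g : G => (MonoidAlgebra.of F G g :
        MonoidAlgebra F G)) = ⊤ := by
      have := (MonoidAlgebra.basis G F).span_eq
      convert this using 2
      rfl
    have hsup : (⊤ : Submodule F (MonoidAlgebra F G)) ≤
        (F ∙ (1 : MonoidAlgebra F G)) ⊔
          Submodule.span F {y : MonoidAlgebra F G | ∃ g : G, y = MonoidAlgebra.of F G g - 1} := by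
      rw [← hb, Submodule.span_le]
      rintro - ⟨g, rfl⟩
      show (MonoidAlgebra.of F G g : MonoidAlgebra F G) ∈
        (F ∙ (1 : MonoidAlgebra F G)) ⊔
          Submodule.span F {y : MonoidAlgebra F G | ∃ g : G, y = MonoidAlgebra.of F G g - 1}
      have h1 : (MonoidAlgebra.of F G g : MonoidAlgebra F G) =
          1 + (MonoidAlgebra.of F G g - 1) := by ring
      rw [h1]
      exact Submodule.add_mem_sup (Submodule.mem_span_singleton_self _)
        (Submodule.subset_span ⟨g, rfl⟩)
    obtain ⟨y, hy, z, hz, hyz⟩ := Submodule.mem_sup.mp (hsup trivial : x ∈ _)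
    obtain ⟨c, rfl⟩ := Submodule.mem_span_singleton.mp hy
    have hzmem : ∀ (J'' : Ideal (MonoidAlgebra F G)),
        (∀ g : G, MonoidAlgebra.of F G g - 1 ∈ J'') → z ∈ J'' := by
      intro J'' hJ''
      have : Submodule.span F {y : MonoidAlgebra F G | ∃ g : G, y = MonoidAlgebra.of F G g - 1}
          ≤ J''.restrictScalars F := by
        rw [Submodule.span_le]
        rintro - ⟨g, rfl⟩
        exact hJ'' g
      exact this hz
    have hzI : z ∈ I' := hzmem I' hIg'
    have hzJ : z ∈ J' := hzmem J' hJg'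
    have hcx : c • (1 : MonoidAlgebra F G) = x - z := by rw [← hyz]; ring
    rcases eq_or_ne c 0 with rfl | hc
    · rw [zero_smul] at hcx
      have : x = z := by linear_combination -hcx
      rwa [this]
    · exfalso
      have hmem : c • (1 : MonoidAlgebra F G) ∈ I'.restrictScalars F := by
        rw [hcx]; exact Ideal.sub_mem I' hx hzI
      have h1 : (1 : MonoidAlgebra F G) ∈ I'.restrictScalars F := by
        have := Submodule.smul_mem (I'.restrictScalars F) c⁻¹ hmem
        rwa [smul_smul, inv_mul_cancel₀ hc, one_smul] at this
      exact hI'.ne_top ((Ideal.eq_top_iff_one I').mpr h1)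
  exact le_antisymm (key I hI hIg J hJg) (key J hJ hJg I hIg)

end Dichotomy

/-- Let `r` be a prime, `G` an elementary abelian group of order `r ^ m`, `q` a prime
power with `r ∤ q`, `F` the field with `q` elements, and `n = ord(q mod r) > 1`.
Counting irreducible `F`-representations of `G` up to equivalence as maximal ideals
of the commutative algebra `FG` (the degree of the representation attached to `I`
being `dim_F FG/I`): `G` has exactly one irreducible representation of degree `1`,
exactly `(r^m − 1)/n` of degree `n`, and no others. -/
theorem elementary_abelian_irreducibles
    (r m : ℕ) (hr : r.Prime)
    (G : Type*) [CommGroup G] [Fintype G] (hcard : Fintype.card G = r ^ m)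
    (hG : ∀ g : G, g ^ r = 1)
    (p k q : ℕ) (hp : p.Prime) (hk : 0 < k) (hq : q = p ^ k) (hrq : ¬ r ∣ q)
    (F : Type*) [Field F] [Fintype F] (hF : Fintype.card F = q)
    (n : ℕ) (hn : n = orderOf ((q : ZMod r))) (hn1 : 1 < n) :
    Nat.card {I : Ideal (MonoidAlgebra F G) //
        I.IsMaximal ∧ Module.finrank F (MonoidAlgebra F G ⧸ I) = 1} = 1 ∧
      Nat.card {I : Ideal (MonoidAlgebra F G) //
        I.IsMaximal ∧ Module.finrank F (MonoidAlgebra F G ⧸ I) = n} = (r ^ m - 1) / n ∧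
      ∀ I : Ideal (MonoidAlgebra F G), I.IsMaximal →
        Module.finrank F (MonoidAlgebra F G ⧸ I) = 1 ∨
          Module.finrank F (MonoidAlgebra F G ⧸ I) = n := by
  classical
  haveI : Module.Finite F (MonoidAlgebra F G) :=
    Module.Finite.of_basis (MonoidAlgebra.basis G F : Module.Basis G F (MonoidAlgebra F G))
  haveI : IsArtinianRing (MonoidAlgebra F G) := isArtinian_of_tower F inferInstance
  haveI : IsReduced (MonoidAlgebra F G) := red r m hr G hcard p k q hp hk hq hrq F hF
  haveI := (IsArtinianRing.setOfPred_isMaximal_finite (MonoidAlgebra F G)).to_subtype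
  haveI : Fintype {I : Ideal (MonoidAlgebra F G) | I.IsMaximal} := Fintype.ofFinite _
  have hn0 : 0 < n := by omega
  -- the dichotomy
  have dich : ∀ I : Ideal (MonoidAlgebra F G), I.IsMaximal →
      (Module.finrank F (MonoidAlgebra F G ⧸ I) = 1 ∧
        ∀ g : G, MonoidAlgebra.of F G g - 1 ∈ I) ∨
      Module.finrank F (MonoidAlgebra F G ⧸ I) = n := by
    intro I hI
    haveI := hI
    by_cases h : ∀ g : G, Ideal.Quotient.mk I (MonoidAlgebra.of F G g) = 1
    · left
      refine ⟨dim_one_of_trivial G F I h, fun g => ?_⟩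
      have := h g
      rw [← (Ideal.Quotient.mk I).map_one] at this
      exact (Ideal.Quotient.mk_eq_mk_iff_sub_mem _ _).mp this
    · right
      exact dim_n_of_nontrivial r hr G hG p k q hp hk hq F hF n hn hn1 I (not_forall.mp h)
  -- the augmentation ideal
  let ε : MonoidAlgebra F G →ₐ[F] F := (MonoidAlgebra.lift F F G) 1
  have hεof : ∀ g : G, ε (MonoidAlgebra.of F G g) = 1 := fun g => by
    rw [MonoidAlgebra.lift_of]; rfl
  have hsurj : Function.Surjective ε := fun c =>
    ⟨algebraMap F (MonoidAlgebra F G) c, by rw [AlgHom.commutes]; simp⟩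
  set Iaug : Ideal (MonoidAlgebra F G) := RingHom.ker ε with hIaugdef
  have hIaugmax : Iaug.IsMaximal := RingHom.ker_isMaximal_of_surjective ε hsurj
  have hIaug1 : Module.finrank F (MonoidAlgebra F G ⧸ Iaug) = 1 := by
    have e := Ideal.quotientKerAlgEquivOfSurjective hsurj
    rw [e.toLinearEquiv.finrank_eq, Module.finrank_self]
  have hIaugg : ∀ g : G, MonoidAlgebra.of F G g - 1 ∈ Iaug := fun g => by
    rw [hIaugdef, RingHom.mem_ker, map_sub, map_one, hεof g, sub_self]
  -- any maximal ideal of dimension one is the augmentation ideal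
  have hchar1 : ∀ I : Ideal (MonoidAlgebra F G), I.IsMaximal →
      Module.finrank F (MonoidAlgebra F G ⧸ I) = 1 → I = Iaug := by
    intro I hI h1
    rcases dich I hI with ⟨-, hg⟩ | hnn
    · exact aug_unique r hr G hG F I Iaug hI hIaugmax hg hIaugg
    · omega
  -- the sum of the dimensions
  set T := {I : Ideal (MonoidAlgebra F G) | I.IsMaximal} with hT
  let D : T → ℕ := fun I => Module.finrank F (MonoidAlgebra F G ⧸ I.1)
  have hD : ∀ I : T, D I = 1 ∨ D I = n := by
    intro I
    rcases dich I.1 I.2 with ⟨h1, -⟩ | h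
    exacts [Or.inl h1, Or.inr h]
  have hsum : Module.finrank F (MonoidAlgebra F G) = ∑ I : T, D I := by
    haveI : Fintype (MaximalSpectrum (MonoidAlgebra F G)) := Fintype.ofFinite _
    let e : MonoidAlgebra F G ≃ₐ[F]
        (∀ I : MaximalSpectrum (MonoidAlgebra F G), MonoidAlgebra F G ⧸ I.asIdeal) :=
      { IsArtinianRing.equivPi (MonoidAlgebra F G) with commutes' := fun c => rfl }
    rw [e.toLinearEquiv.finrank_eq, Module.finrank_pi_fintype]
    let e' : MaximalSpectrum (MonoidAlgebra F G) ≃ T := MaximalSpectrum.equivSubtype _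
    exact Fintype.sum_equiv e' _ _ (fun _ => rfl)
  have hArk : Module.finrank F (MonoidAlgebra F G) = r ^ m := by
    rw [Module.finrank_eq_card_basis (M := MonoidAlgebra F G) (ι := G) (R := F)
      (MonoidAlgebra.basis G F), hcard]
  set s1 : Finset T := Finset.univ.filter (fun I => D I = 1) with hs1
  set sn : Finset T := Finset.univ.filter (fun I => D I = n) with hsn
  have hs1card : s1.card = 1 := by
    have : s1 = {⟨Iaug, hIaugmax⟩} := by
      apply Finset.eq_singleton_iff_unique_mem.mpr
      constructor
      · rw [hs1, Finset.mem_filter]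
        exact ⟨Finset.mem_univ _, hIaug1⟩
      · intro J hJ
        rw [hs1, Finset.mem_filter] at hJ
        exact Subtype.ext (hchar1 J.1 J.2 hJ.2)
    rw [this, Finset.card_singleton]
  have hsplit : r ^ m = s1.card + sn.card * n := by
    have hdisj : Disjoint s1 sn := by
      rw [Finset.disjoint_filter]
      intro I _ h1 hnn
      omega
    have hcover : (Finset.univ : Finset T) = s1 ∪ sn := by
      ext I
      simp only [Finset.mem_union, hs1, hsn, Finset.mem_filter, Finset.mem_univ, true_and]
      exact ⟨fun _ => hD I, fun _ => trivial⟩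
    calc r ^ m = ∑ I : T, D I := by rw [← hsum, hArk]
      _ = ∑ I ∈ s1, D I + ∑ I ∈ sn, D I := by
          rw [← Finset.sum_union hdisj, ← hcover]
      _ = s1.card + sn.card * n := by
          rw [Finset.sum_congr rfl (fun I hI => (Finset.mem_filter.mp hI).2),
            Finset.sum_congr rfl (fun I (hI : I ∈ sn) => (Finset.mem_filter.mp hI).2),
            Finset.sum_const, Finset.sum_const, smul_eq_mul, smul_eq_mul, mul_one]
  -- counting conclusions
  have hcount1 : Nat.card {I : Ideal (MonoidAlgebra F G) //
      I.IsMaximal ∧ Module.finrank F (MonoidAlgebra F G ⧸ I) = 1} = 1 := by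
    rw [Nat.card_eq_one_iff_unique]
    constructor
    · constructor
      intro a b
      apply Subtype.ext
      rw [hchar1 a.1 a.2.1 a.2.2, hchar1 b.1 b.2.1 b.2.2]
    · exact ⟨⟨Iaug, hIaugmax, hIaug1⟩⟩
  have hcountn : Nat.card {I : Ideal (MonoidAlgebra F G) //
      I.IsMaximal ∧ Module.finrank F (MonoidAlgebra F G ⧸ I) = n} = sn.card := by
    have e2 : {I : Ideal (MonoidAlgebra F G) //
        I.IsMaximal ∧ Module.finrank F (MonoidAlgebra F G ⧸ I) = n} ≃
        {I : T // D I = n} :=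
      ⟨fun x => ⟨⟨x.1, x.2.1⟩, x.2.2⟩, fun x => ⟨x.1.1, x.1.2, x.2⟩,
        fun _ => rfl, fun _ => rfl⟩
    rw [Nat.card_congr e2, Nat.card_eq_fintype_card, Fintype.card_subtype]
  refine ⟨hcount1, ?_, fun I hI => ?_⟩
  · rw [hcountn]
    have h1 : r ^ m - 1 = sn.card * n := by omega
    rw [h1, Nat.mul_div_cancel _ hn0]
  · rcases dich I hI with ⟨h1, -⟩ | h
    exacts [Or.inl h1, Or.inr h]
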